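/- (Theorem 2, key differential inequality.) Let J = Ĵ + J̃ be a symmetric positive-definite 3×3 real matrix with |J̃ᵢⱼ| ≤ 𝒥ᵢⱼ entrywise; let λ > 0, Φ ∈ ℝ³ with Φᵢ > 0, ηᵢ > 0. Let ω, ω_d : ℝ → ℝ³ be differentiable, f = f̂ + f̃ and d : ℝ → ℝ³ with |f̃(t)| ≤ ℱ(t) and |d(t)| ≤ D componentwise. Let q_e : ℝ → Quaternion ℝ be differentiable with ‖q_e(t)‖ = 1 and q_e'(t) = (1/2) q_e(t) * ⟦ω(t) − ω_d(t)⟧, and set s = ω − ω_d + λ sgn₊(q_e°) q⃗_e and s_Δ,ᵢ = sᵢ − Φᵢ · sat(sᵢ/Φᵢ). Fix t with q_e°(t) ≠ 0 and |sᵢ(t)| > Φᵢ for every i, suppose the dynamics J ω' = −ω × (J ω) + f + M_b + d hold on a neighborhood of t with the boundary-layer control law M_b = Ĵ ω_d' + ω × (Ĵ ω) − f̂ − λ sgn₊(q_e°) Ĵ (q⃗_e)' − K∘sat(s/Φ) (sat taken componentwise), and suppose the robust gains satisfy kᵢ ≥ |ω × (J̃ ω)|ᵢ + (𝒥 · |ω_d'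 − λ sgn₊(q_e°)(q⃗_e)'|)ᵢ + ℱᵢ(t) + Dᵢ + ηᵢ at time t. Then V(t) = s_Δ(t)ᵀ J s_Δ(t) is differentiable at t with V'(t) ≤ −2 Σᵢ ηᵢ |s_Δ,ᵢ(t)|. -/

import Mathlib

noncomputable section

open Matrix Filter Topology

/-- `sgn₊ x = 1` if `x ≥ 0` and `-1` if `x < 0`. -/
def sgnPlus (x : ℝ) : ℝ := if 0 ≤ x then 1 else -1

/-- The saturation function: `sat x = x` for `|x| ≤ 1` and `sat x = sign x` otherwise. -/
def sat (x : ℝ) : ℝ := max (-1) (min 1 x)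

/-- The vector (imaginary) part of a quaternion. -/
def vecPart (p : Quaternion ℝ) : Fin 3 → ℝ := ![p.imI, p.imJ, p.imK]

/-- The pure-imaginary quaternion `⟦v⟧` with vector part `v`. -/
def quatOfVec (v : Fin 3 → ℝ) : Quaternion ℝ := ⟨0, v 0, v 1, v 2⟩

lemma sat_eq_one {x : ℝ} (hx : 1 ≤ x) : sat x = 1 := by
  rw [sat, min_eq_left hx]
  exact max_eq_right (by norm_num)

lemma sat_eq_neg_one {x : ℝ} (hx : x ≤ -1) : sat x = -1 := by
  rw [sat, min_eq_right (hx.trans (by norm_num))]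
  exact max_eq_left hx

/-- `vecPart` as a continuous linear map. -/
def vecPartL : Quaternion ℝ →L[ℝ] (Fin 3 → ℝ) :=
  LinearMap.toContinuousLinearMap
    (LinearMap.pi fun i : Fin 3 =>
      ![QuaternionAlgebra.imIₗ (-1 : ℝ) 0 (-1), QuaternionAlgebra.imJₗ (-1 : ℝ) 0 (-1),
        QuaternionAlgebra.imKₗ (-1 : ℝ) 0 (-1)] i)

lemma vecPartL_apply (p : Quaternion ℝ) : vecPartL p = vecPart p := by
  funext i
  fin_cases i <;> rfl

theorem robust_sliding_control_differential_inequality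
    (J Jhat Jtil calJ : Matrix (Fin 3) (Fin 3) ℝ)
    (hJ : J = Jhat + Jtil) (hJsymm : J.IsSymm) (hJpos : J.PosDef)
    (hJtil : ∀ i j, |Jtil i j| ≤ calJ i j)
    (lam : ℝ) (hlam : 0 < lam)
    (Φ η K : Fin 3 → ℝ) (hΦ : ∀ i, 0 < Φ i) (hη : ∀ i, 0 < η i)
    (ω ωd : ℝ → Fin 3 → ℝ) (hω : Differentiable ℝ ω) (hωd : Differentiable ℝ ωd)
    (f fhat ftil d : ℝ → Fin 3 → ℝ) (F : ℝ → Fin 3 → ℝ) (D : Fin 3 → ℝ)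
    (hf : ∀ τ : ℝ, f τ = fhat τ + ftil τ)
    (hftil : ∀ (τ : ℝ) (i : Fin 3), |ftil τ i| ≤ F τ i)
    (hd : ∀ (τ : ℝ) (i : Fin 3), |d τ i| ≤ D i)
    (qe : ℝ → Quaternion ℝ) (hqe : Differentiable ℝ qe)
    (hunit : ∀ τ : ℝ, ‖qe τ‖ = 1)
    (hkin : ∀ τ : ℝ, deriv qe τ = (1 / 2 : ℝ) • (qe τ * quatOfVec (ω τ - ωd τ)))
    (s sΔ : ℝ → Fin 3 → ℝ)
    (hs : ∀ τ : ℝ, s τ = ω τ - ωd τ + (lam * sgnPlus (qe τ).re) • vecPart (qe τ))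
    (hsΔ : ∀ (τ : ℝ) (i : Fin 3), sΔ τ i = s τ i - Φ i * sat (s τ i / Φ i))
    (t : ℝ) (hre : (qe t).re ≠ 0) (houter : ∀ i, Φ i < |s t i|)
    (Mb : ℝ → Fin 3 → ℝ)
    (hMb : ∀ τ : ℝ, Mb τ =
      Jhat *ᵥ deriv ωd τ + ω τ ⨯₃ (Jhat *ᵥ ω τ) - fhat τ -
        (lam * sgnPlus (qe τ).re) • (Jhat *ᵥ deriv (fun σ => vecPart (qe σ)) τ) -
        (fun i => K i * sat (s τ i / Φ i)))
    (hdyn : ∀ᶠ τ in 𝓝 t,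
      J *ᵥ deriv ω τ = -(ω τ ⨯₃ (J *ᵥ ω τ)) + f τ + Mb τ + d τ)
    (hgain : ∀ i,
      |(ω t ⨯₃ (Jtil *ᵥ ω t)) i| +
        (calJ *ᵥ fun j =>
          |deriv ωd t j - lam * sgnPlus (qe t).re *
            deriv (fun σ => vecPart (qe σ)) t j|) i +
        F t i + D i + η i ≤ K i) :
    DifferentiableAt ℝ (fun τ => sΔ τ ⬝ᵥ (J *ᵥ sΔ τ)) t ∧
      deriv (fun τ => sΔ τ ⬝ᵥ (J *ᵥ sΔ τ)) t ≤ -2 * ∑ i, η i * |sΔ t i| := by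
  set c : ℝ := sgnPlus (qe t).re with hcdef
  -- differentiability of the vector part of qe
  have hvq : Differentiable ℝ (fun σ => vecPart (qe σ)) := by
    have h1 : Differentiable ℝ (fun σ => vecPartL (qe σ)) :=
      vecPartL.differentiable.comp hqe
    simpa only [vecPartL_apply] using h1
  set qv' : Fin 3 → ℝ := deriv (fun σ => vecPart (qe σ)) t with hqv'def
  have hqv : HasDerivAt (fun σ => vecPart (qe σ)) qv' t := (hvq t).hasDerivAt
  -- local constancy of sgnPlus (qe τ).re
  have hre_cont : Continuous fun τ => (qe τ).re :=
    Quaternion.continuous_re.comp hqe.continuous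
  have hcloc : ∀ᶠ τ in 𝓝 t, sgnPlus (qe τ).re = c := by
    rcases hre.lt_or_gt with h | h
    · have hev : ∀ᶠ τ in 𝓝 t, (qe τ).re < 0 :=
        hre_cont.continuousAt.eventually_lt continuousAt_const h
      have hct : c = -1 := by rw [hcdef, sgnPlus, if_neg (not_le.mpr h)]
      filter_upwards [hev] with τ hτ
      rw [sgnPlus, if_neg (not_le.mpr hτ), hct]
    · have hev : ∀ᶠ τ in 𝓝 t, 0 < (qe τ).re :=
        continuousAt_const.eventually_lt hre_cont.continuousAt h
      have hct : c = 1 := by rw [hcdef, sgnPlus, if_pos h.le]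
      filter_upwards [hev] with τ hτ
      rw [sgnPlus, if_pos hτ.le, hct]
  -- local smooth representative of s
  set g : ℝ → Fin 3 → ℝ := fun τ => ω τ - ωd τ + (lam * c) • vecPart (qe τ) with hgdef
  set s' : Fin 3 → ℝ := deriv ω t - deriv ωd t + (lam * c) • qv' with hs'def
  have hg : HasDerivAt g s' t :=
    ((hω t).hasDerivAt.sub (hωd t).hasDerivAt).add (hqv.const_smul (lam * c))
  have hsg : s =ᶠ[𝓝 t] g := by
    filter_upwards [hcloc] with τ hτ
    rw [hs τ, hτ]
  have hsgt : s t = g t := hsg.self_of_nhds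
  -- the saturation values at time t
  set σs : Fin 3 → ℝ := fun i => sat (s t i / Φ i) with hσdef
  have hσ : ∀ i, (Φ i < s t i ∧ σs i = 1) ∨ (s t i < -Φ i ∧ σs i = -1) := by
    intro i
    rcases lt_or_ge (s t i) 0 with h | h
    · right
      have h1 : Φ i < -(s t i) := by
        have := houter i; rwa [abs_of_neg h] at this
      refine ⟨by linarith, ?_⟩
      show sat (s t i / Φ i) = -1
      exact sat_eq_neg_one (by rw [div_le_iff₀ (hΦ i)]; linarith)
    · left
      have h1 : Φ i < s t i := by
        have := houter i; rwa [abs_of_nonneg h] at this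
      refine ⟨h1, ?_⟩
      show sat (s t i / Φ i) = 1
      exact sat_eq_one ((le_div_iff₀ (hΦ i)).mpr (by linarith))
  -- saturation is locally constant
  have hsatev : ∀ᶠ τ in 𝓝 t, ∀ i, sat (s τ i / Φ i) = σs i := by
    rw [eventually_all]
    intro i
    have hgc : ContinuousAt (fun τ => g τ i) t :=
      ((hasDerivAt_pi.mp hg) i).continuousAt
    rcases hσ i with ⟨h1, h2⟩ | ⟨h1, h2⟩
    · have h1' : Φ i < g t i := by rw [← hsgt]; exact h1
      have hev : ∀ᶠ τ in 𝓝 t, Φ i < g τ i :=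
        continuousAt_const.eventually_lt hgc h1'
      filter_upwards [hev, hsg] with τ hτ hg'
      have : s τ i = g τ i := congrFun hg' i
      rw [this, h2]
      exact sat_eq_one ((le_div_iff₀ (hΦ i)).mpr (by linarith))
    · have h1' : g t i < -Φ i := by rw [← hsgt]; exact h1
      have hev : ∀ᶠ τ in 𝓝 t, g τ i < -Φ i :=
        hgc.eventually_lt continuousAt_const h1'
      filter_upwards [hev, hsg] with τ hτ hg'
      have : s τ i = g τ i := congrFun hg' i
      rw [this, h2]
      exact sat_eq_neg_one (by rw [div_le_iff₀ (hΦ i)]; linarith)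
  -- local representation of sΔ and its derivative
  have hsΔloc : sΔ =ᶠ[𝓝 t] fun τ => g τ - fun i => Φ i * σs i := by
    filter_upwards [hsg, hsatev] with τ h1 h2
    funext i
    rw [hsΔ τ i, h2 i, congrFun h1 i]
    simp [Pi.sub_apply]
  have hsΔd : HasDerivAt sΔ s' t :=
    (hg.sub_const (fun i => Φ i * σs i)).congr_of_eventuallyEq hsΔloc
  have hcomp : ∀ i, HasDerivAt (fun τ => sΔ τ i) (s' i) t :=
    fun i => hasDerivAt_pi.mp hsΔd i
  -- derivative of the Lyapunov function
  have hV : HasDerivAt (fun τ => sΔ τ ⬝ᵥ (J *ᵥ sΔ τ))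
      (∑ i, (s' i * (J *ᵥ sΔ t) i + sΔ t i * (J *ᵥ s') i)) t := by
    have h1 : HasDerivAt (fun τ => ∑ i, sΔ τ i * ∑ j, J i j * sΔ τ j)
        (∑ i, (s' i * ∑ j, J i j * sΔ t j + sΔ t i * ∑ j, J i j * s' j)) t :=
      HasDerivAt.fun_sum fun i _ =>
        (hcomp i).mul (HasDerivAt.fun_sum fun j _ => (hcomp j).const_mul (J i j))
    convert h1 using 1 <;> simp [dotProduct, mulVec]
  refine ⟨hV.differentiableAt, ?_⟩
  -- symmetry of J
  have hsym : ∑ i, s' i * (J *ᵥ sΔ t) i = ∑ i, sΔ t i * (J *ᵥ s') i := by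
    have h1 : s' ⬝ᵥ (J *ᵥ sΔ t) = sΔ t ⬝ᵥ (J *ᵥ s') := by
      rw [dotProduct_mulVec, ← mulVec_transpose, hJsymm.eq, dotProduct_comm]
    simpa [dotProduct] using h1
  -- key algebraic identity for J *ᵥ s'
  set u : Fin 3 → ℝ := fun j => deriv ωd t j - lam * c * qv' j with hudef
  have hueq : u = deriv ωd t - (lam * c) • qv' := by
    funext j; simp [hudef, mul_assoc]
  have hdt : J *ᵥ deriv ω t = -(ω t ⨯₃ (J *ᵥ ω t)) + f t + Mb t + d t :=
    hdyn.self_of_nhds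
  have hkey : J *ᵥ s' = -(ω t ⨯₃ (Jtil *ᵥ ω t)) + ftil t + d t - Jtil *ᵥ u -
      fun i => K i * sat (s t i / Φ i) := by
    have h1 : J *ᵥ s' = J *ᵥ deriv ω t - J *ᵥ deriv ωd t + (lam * c) • (J *ᵥ qv') := by
      rw [hs'def, mulVec_add, mulVec_sub, mulVec_smul]
    have hcr : ω t ⨯₃ (J *ᵥ ω t) = ω t ⨯₃ (Jhat *ᵥ ω t) + ω t ⨯₃ (Jtil *ᵥ ω t) := by
      rw [hJ, add_mulVec, map_add]
    have hJv : ∀ v : Fin 3 → ℝ, J *ᵥ v = Jhat *ᵥ v + Jtil *ᵥ v := fun v => by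
      rw [hJ, add_mulVec]
    have hJu : Jtil *ᵥ u = Jtil *ᵥ deriv ωd t - (lam * c) • (Jtil *ᵥ qv') := by
      rw [hueq, mulVec_sub, mulVec_smul]
    rw [h1, hdt, hMb t, hf t, ← hcdef, ← hqv'def, hcr, hJv (deriv ωd t), hJv qv',
      hJu, smul_add]
    abel
  -- sign of sΔ t
  have hsΔt : ∀ i, sΔ t i = s t i - Φ i * σs i := fun i => hsΔ t i
  have hσmul : ∀ i, sΔ t i * σs i = |sΔ t i| := by
    intro i
    rcases hσ i with ⟨h1, h2⟩ | ⟨h1, h2⟩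
    · have hpos : 0 < sΔ t i := by rw [hsΔt i, h2]; have := hΦ i; linarith
      rw [h2, mul_one, abs_of_pos hpos]
    · have hneg : sΔ t i < 0 := by rw [hsΔt i, h2]; have := hΦ i; linarith
      rw [h2, abs_of_neg hneg]; ring
  -- per-component estimate
  have hterm : ∀ i, sΔ t i * (J *ᵥ s') i ≤ -(η i * |sΔ t i|) := by
    intro i
    have hkeyi : (J *ᵥ s') i =
        (-(ω t ⨯₃ (Jtil *ᵥ ω t)) i + ftil t i + d t i - (Jtil *ᵥ u) i) -
          K i * σs i := by
      simpa only [Pi.sub_apply, Pi.add_apply, Pi.neg_apply, hσdef] using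
        congrFun hkey i
    set A : ℝ := -(ω t ⨯₃ (Jtil *ᵥ ω t)) i + ftil t i + d t i - (Jtil *ᵥ u) i with hAdef
    have h2 : |(Jtil *ᵥ u) i| ≤ (calJ *ᵥ fun j => |u j|) i := by
      simp only [mulVec, dotProduct]
      calc |∑ j, Jtil i j * u j| ≤ ∑ j, |Jtil i j * u j| :=
            Finset.abs_sum_le_sum_abs _ _
        _ ≤ ∑ j, calJ i j * |u j| := Finset.sum_le_sum fun j _ => by
            rw [abs_mul]
            exact mul_le_mul_of_nonneg_right (hJtil i j) (abs_nonneg _)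
    have h3 := hgain i
    have hA : |A| ≤ K i - η i := by
      have h4 : |A| ≤ |(ω t ⨯₃ (Jtil *ᵥ ω t)) i| + |ftil t i| + |d t i| +
          |(Jtil *ᵥ u) i| := by
        rw [hAdef]
        calc |-(ω t ⨯₃ (Jtil *ᵥ ω t)) i + ftil t i + d t i - (Jtil *ᵥ u) i|
            ≤ |-(ω t ⨯₃ (Jtil *ᵥ ω t)) i + ftil t i + d t i| + |(Jtil *ᵥ u) i| :=
              abs_sub _ _
          _ ≤ |-(ω t ⨯₃ (Jtil *ᵥ ω t)) i + ftil t i| + |d t i| + |(Jtil *ᵥ u) i| := by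
              have := abs_add_le (-(ω t ⨯₃ (Jtil *ᵥ ω t)) i + ftil t i) (d t i)
              linarith
          _ ≤ |-(ω t ⨯₃ (Jtil *ᵥ ω t)) i| + |ftil t i| + |d t i| + |(Jtil *ᵥ u) i| := by
              have := abs_add_le (-(ω t ⨯₃ (Jtil *ᵥ ω t)) i) (ftil t i)
              linarith
          _ = |(ω t ⨯₃ (Jtil *ᵥ ω t)) i| + |ftil t i| + |d t i| + |(Jtil *ᵥ u) i| := by
              rw [show |-(ω t ⨯₃ (Jtil *ᵥ ω t)) i| = |(ω t ⨯₃ (Jtil *ᵥ ω t)) i| from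
                abs_neg _]
      have h5 := hftil t i
      have h6 := hd t i
      linarith
    have h7 : 0 ≤ |sΔ t i| := abs_nonneg _
    have h8 : sΔ t i * A ≤ |sΔ t i| * |A| := by
      calc sΔ t i * A ≤ |sΔ t i * A| := le_abs_self _
        _ = |sΔ t i| * |A| := abs_mul _ _
    have h9 : |sΔ t i| * |A| ≤ |sΔ t i| * (K i - η i) :=
      mul_le_mul_of_nonneg_left hA h7
    rw [hkeyi, mul_sub, show sΔ t i * (K i * σs i) = K i * (sΔ t i * σs i) by ring,
      hσmul i]
    linarith
  -- conclusion
  rw [hV.deriv, Finset.sum_add_distrib, hsym, ← two_mul]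
  have hsum : ∑ i, sΔ t i * (J *ᵥ s') i ≤ ∑ i, -(η i * |sΔ t i|) :=
    Finset.sum_le_sum fun i _ => hterm i
  have : ∑ i, -(η i * |sΔ t i|) = -∑ i, η i * |sΔ t i| := by
    rw [Finset.sum_neg_distrib]
  rw [this] at hsum
  linarith
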